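/- Let n ≥ 1 and let f be a Schwartz function on ℝ^n. Then for all (t,z) ∈ ℝ × ℝ^n and all indices i ≠ j the following intertwining identities hold, where D denotes −i times the corresponding partial derivative: (z_i D_{z_j} − z_j D_{z_i})(𝒫₀f)(t,z) = 𝒫₀((ζ_i D_{ζ_j} − ζ_j D_{ζ_i}) f)(t,z); (2t D_{z_j} − z_j)(𝒫₀f)(t,z) = 𝒫₀(D_{ζ_j} f)(t,z); and D_{z_j}(𝒫₀f)(t,z) = 𝒫₀(ζ_j f)(t,z), where ζ_j f denotes the function ζ ↦ ζ_j f(ζ). -/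

import Mathlib

open MeasureTheory Complex Filter

noncomputable section

abbrev Eucl (n : ℕ) := EuclideanSpace ℝ (Fin n)

/-- Partial derivative in the `j`-th coordinate direction. -/
def pd {n : ℕ} (j : Fin n) (u : Eucl n → ℂ) : Eucl n → ℂ :=
  fun z => fderiv ℝ u z (EuclideanSpace.single j 1)

/-- `D_{z_j} = -i ∂_{z_j}`. -/
def Dop {n : ℕ} (j : Fin n) (u : Eucl n → ℂ) : Eucl n → ℂ :=
  fun z => -Complex.I * pd j u z

/-- Index type for the modules `M_t`, `M_{t,0}`, `𝒩`. -/
abbrev MIdx (n : ℕ) := Unit ⊕ (Fin n × Fin n) ⊕ Fin n ⊕ Fin n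

/-- Generators of the module `M_t` (for `|t| ≥ 1/2`): identity,
rotations `z_j D_{z_i} - z_i D_{z_j}`, `2t D_{z_j} - z_j`, and `D_{z_j}`. -/
def Mgen {n : ℕ} (t : ℝ) : MIdx n → (Eucl n → ℂ) → (Eucl n → ℂ)
  | Sum.inl _ => id
  | Sum.inr (Sum.inl (i, j)) => fun u z => (z j : ℂ) * Dop i u z - (z i : ℂ) * Dop j u z
  | Sum.inr (Sum.inr (Sum.inl j)) => fun u z => 2 * (t : ℂ) * Dop j u z - (z j : ℂ) * u z
  | Sum.inr (Sum.inr (Sum.inr j)) => fun u => Dop j u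

/-- Generators of the module `M_{t,0}` (for `|t| ≥ 1/2`): identity,
rotations `z_j D_{z_i} - z_i D_{z_j}`, `2t D_{z_j}`, and `D_{z_j} + z_j/(2t)`. -/
def M0gen {n : ℕ} (t : ℝ) : MIdx n → (Eucl n → ℂ) → (Eucl n → ℂ)
  | Sum.inl _ => id
  | Sum.inr (Sum.inl (i, j)) => fun u z => (z j : ℂ) * Dop i u z - (z i : ℂ) * Dop j u z
  | Sum.inr (Sum.inr (Sum.inl j)) => fun u z => 2 * (t : ℂ) * Dop j u z
  | Sum.inr (Sum.inr (Sum.inr j)) => fun u z => Dop j u z + ((z j : ℂ) / (2 * (t : ℂ))) * u z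

/-- For `|t| < 1/2` the modules are defined with `t` replaced by `t+1`. -/
def tEff (t : ℝ) : ℝ := if 1/2 ≤ |t| then t else t + 1

/-- Apply an ordered tuple of generators `A₁ ⋯ A_k` to `u`. -/
def applyTuple {X ι : Type*} (gen : ι → (X → ℂ) → (X → ℂ)) {k : ℕ}
    (A : Fin k → ι) (u : X → ℂ) : X → ℂ :=
  (List.ofFn fun i => gen (A i)).foldr (fun f v => f v) u

/-- The module regularity norm `‖u‖_{W^k}` with respect to a generating family `gen`:
square root of the sum of `‖A₁⋯A_k u‖²_{L²}` over all ordered `k`-tuples. -/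
def Wnorm {n : ℕ} {ι : Type*} [Fintype ι] (gen : ι → (Eucl n → ℂ) → (Eucl n → ℂ))
    (k : ℕ) (u : Eucl n → ℂ) : ℝ :=
  Real.sqrt (∑ A : Fin k → ι, ((eLpNorm (applyTuple gen A u) 2 volume).toReal) ^ 2)

/-- The Poisson operator `(𝒫₀f)(t,z) = (2π)^{−n} ∫ e^{−it|ζ|²} e^{iz·ζ} f(ζ) dζ`. -/
def Poisson (n : ℕ) (f : Eucl n → ℂ) (t : ℝ) (z : Eucl n) : ℂ :=
  ((2 * Real.pi) ^ n : ℝ)⁻¹ • ∫ ζ : Eucl n,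
    Complex.exp (-Complex.I * (t : ℂ) * ((‖ζ‖ ^ 2 : ℝ) : ℂ)) *
      Complex.exp (Complex.I * ((inner ℝ z ζ : ℝ) : ℂ)) * f ζ

namespace S18
open VectorFourier

def LL (n : ℕ) : Eucl n →L[ℝ] Eucl n →L[ℝ] ℝ := (-(2 * Real.pi)⁻¹) • innerSL ℝ
def EK (n : ℕ) (t : ℝ) (ζ : Eucl n) : ℂ := Complex.exp (-Complex.I * (t:ℂ) * ((‖ζ‖^2 : ℝ) : ℂ))

lemma LL_apply (n : ℕ) (v w : Eucl n) : LL n v w = -(2 * Real.pi)⁻¹ * (inner ℝ v w : ℝ) := by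
  simp only [LL, ContinuousLinearMap.smul_apply, ContinuousLinearMap.coe_smul', Pi.smul_apply,
    innerSL_apply_apply, smul_eq_mul]
  rfl

lemma kernel_eq (n : ℕ) (z ζ : Eucl n) :
    (Real.fourierChar (-(LL n).toLinearMap₁₂ ζ z) : ℂ)
      = Complex.exp (Complex.I * ((inner ℝ z ζ : ℝ) : ℂ)) := by
  rw [Real.fourierChar_apply]
  congr 1
  have h : ((LL n).toLinearMap₁₂ ζ) z = -(2 * Real.pi)⁻¹ * (inner ℝ ζ z : ℝ) := LL_apply n ζ z
  rw [h, real_inner_comm]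
  push_cast
  have hp : (Real.pi : ℂ) ≠ 0 := Complex.ofReal_ne_zero.2 Real.pi_ne_zero
  field_simp

lemma poisson_eq (n : ℕ) (f : Eucl n → ℂ) (t : ℝ) (z : Eucl n) :
    Poisson n f t z = ((2 * Real.pi) ^ n : ℝ)⁻¹ •
      fourierIntegral Real.fourierChar volume (LL n).toLinearMap₁₂ (fun ζ => EK n t ζ * f ζ) z := by
  unfold Poisson fourierIntegral
  congr 1
  refine integral_congr_ae (Filter.Eventually.of_forall fun ζ => ?_)
  simp only [Circle.smul_def, kernel_eq, EK, smul_eq_mul]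
  ring

variable {n : ℕ} (f : SchwartzMap (Eucl n) ℂ) (t : ℝ)

lemma EK_norm (ζ : Eucl n) : ‖EK n t ζ‖ = 1 := by
  rw [EK, Complex.norm_exp]
  have h : (-Complex.I * (t:ℂ) * ((‖ζ‖^2 : ℝ) : ℂ)).re = 0 := by simp [pow_two]
  rw [h, Real.exp_zero]

def EKd (ζ : Eucl n) : Eucl n →L[ℝ] ℂ :=
  EK n t ζ • ((-Complex.I * (t:ℂ)) • (Complex.ofRealCLM.comp (2 • (innerSL ℝ ζ))))

lemma hasFDerivAt_EK (ζ : Eucl n) : HasFDerivAt (EK n t) (EKd t ζ) ζ := by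
  have h1 : HasFDerivAt (fun x : Eucl n => ‖x‖^2) (2 • (innerSL ℝ ζ)) ζ := by
    simpa using (hasFDerivAt_id ζ).norm_sq
  exact ((Complex.ofRealCLM.hasFDerivAt.comp ζ h1).const_mul (-Complex.I * (t:ℂ))).cexp

lemma EKd_apply (ζ x : Eucl n) :
    EKd t ζ x = EK n t ζ * ((-Complex.I * (t:ℂ)) * ((2 * (inner ℝ ζ x : ℝ) : ℝ) : ℂ)) := by
  simp only [EKd, ContinuousLinearMap.smul_apply, ContinuousLinearMap.coe_comp',
    Function.comp_apply, Complex.ofRealCLM_apply, smul_eq_mul]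
  push_cast
  ring_nf
  rfl

lemma EKd_norm_le (ζ : Eucl n) : ‖EKd t ζ‖ ≤ 2 * |t| * ‖ζ‖ := by
  refine ContinuousLinearMap.opNorm_le_bound _ (by positivity) fun x => ?_
  rw [EKd_apply, norm_mul, norm_mul, EK_norm, one_mul]
  have h1 : ‖-Complex.I * (t:ℂ)‖ = |t| := by simp
  rw [h1, Complex.norm_real, Real.norm_eq_abs, abs_mul]
  have h2 : |(inner ℝ ζ x : ℝ)| ≤ ‖ζ‖ * ‖x‖ := abs_real_inner_le_norm ζ x
  calc |t| * (|(2:ℝ)| * |(inner ℝ ζ x : ℝ)|) ≤ |t| * (2 * (‖ζ‖ * ‖x‖)) := by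
        rw [show |(2:ℝ)| = 2 from abs_two]
        exact mul_le_mul_of_nonneg_left (by linarith [mul_le_mul_of_nonneg_left h2 (by norm_num : (0:ℝ) ≤ 2)]) (abs_nonneg t)
    _ = 2 * |t| * ‖ζ‖ * ‖x‖ := by ring

def gfun : Eucl n → ℂ := fun ζ => EK n t ζ * f ζ

lemma hasFDerivAt_g (ζ : Eucl n) :
    HasFDerivAt (gfun f t) (EK n t ζ • fderiv ℝ f ζ + f ζ • EKd t ζ) ζ :=
  (hasFDerivAt_EK t ζ).mul (f.differentiableAt.hasFDerivAt)

lemma fderiv_g (ζ : Eucl n) : fderiv ℝ (gfun f t) ζ = EK n t ζ • fderiv ℝ f ζ + f ζ • EKd t ζ :=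
  (hasFDerivAt_g f t ζ).fderiv

lemma g_cont : Continuous (gfun f t) := by
  have : Continuous (EK n t) := by
    apply Complex.continuous_exp.comp
    continuity
  exact this.mul f.continuous

lemma g_int : Integrable (gfun f t) (volume : Measure (Eucl n)) := by
  refine (f.integrable.norm).mono' ((g_cont f t).aestronglyMeasurable)
    (Filter.Eventually.of_forall fun ζ => ?_)
  simp only [gfun, norm_mul, EK_norm, one_mul, le_refl]

lemma g_norm_int : Integrable (fun ζ => ‖ζ‖ * ‖gfun f t ζ‖) (volume : Measure (Eucl n)) := by
  refine (f.integrable_pow_mul volume 1).congr ?_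
  refine Filter.Eventually.of_forall fun ζ => ?_
  simp only [gfun, norm_mul, EK_norm, one_mul, pow_one]

lemma fderiv_g_cont : Continuous (fderiv ℝ (gfun f t)) := by
  have hsm : ContDiff ℝ 2 (gfun f t) := by
    have h1 : ContDiff ℝ 2 (EK n t) := by
      apply Complex.contDiff_exp.comp
      exact contDiff_const.mul (Complex.ofRealCLM.contDiff.comp (contDiff_norm_sq ℝ))
    exact h1.mul (f.smooth 2)
  exact hsm.continuous_fderiv (by norm_num)

lemma g_fderiv_int : Integrable (fderiv ℝ (gfun f t)) (volume : Measure (Eucl n)) := by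
  have hmaj : Integrable (fun ζ : Eucl n => ‖fderiv ℝ f ζ‖ + 2 * |t| * (‖ζ‖ * ‖f ζ‖)) volume := by
    have h1 : Integrable (fun ζ : Eucl n => ‖fderiv ℝ f ζ‖) volume := by
      have := ((SchwartzMap.fderivCLM ℝ (Eucl n) ℂ f).integrable (μ := (volume : Measure (Eucl n)))).norm
      simpa [SchwartzMap.fderivCLM_apply] using this
    have h2 : Integrable (fun ζ : Eucl n => 2 * |t| * (‖ζ‖ * ‖f ζ‖)) volume := by
      have := (f.integrable_pow_mul (volume : Measure (Eucl n)) 1).const_mul (2 * |t|)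
      simpa using this
    exact h1.add h2
  refine hmaj.mono' ((fderiv_g_cont f t).aestronglyMeasurable)
    (Filter.Eventually.of_forall fun ζ => ?_)
  rw [fderiv_g f t ζ]
  refine (norm_add_le _ _).trans ?_
  gcongr
  · refine ContinuousLinearMap.opNorm_le_bound _ (norm_nonneg _) fun x => ?_
    rw [ContinuousLinearMap.smul_apply, norm_smul, EK_norm, one_mul]
    exact (fderiv ℝ (⇑f) ζ).le_opNorm x
  · refine ContinuousLinearMap.opNorm_le_bound _ (by positivity) fun x => ?_
    rw [ContinuousLinearMap.smul_apply, norm_smul]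
    calc ‖f ζ‖ * ‖EKd t ζ x‖ ≤ ‖f ζ‖ * (2 * |t| * ‖ζ‖ * ‖x‖) := by
          exact mul_le_mul_of_nonneg_left ((EKd t ζ).le_opNorm x |>.trans
            (mul_le_mul_of_nonneg_right (EKd_norm_le t ζ) (norm_nonneg x))) (norm_nonneg _)
      _ = 2 * |t| * (‖ζ‖ * ‖f ζ‖) * ‖x‖ := by ring

lemma FSR_int : Integrable (fourierSMulRight (LL n) (gfun f t)) (volume : Measure (Eucl n)) := by
  refine (((g_norm_int f t).const_mul (2 * Real.pi * ‖LL n‖)).mono'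
    ((g_int f t).aestronglyMeasurable.fourierSMulRight) ?_)
  refine Filter.Eventually.of_forall fun v => ?_
  calc ‖fourierSMulRight (LL n) (gfun f t) v‖ ≤ 2 * Real.pi * ‖LL n‖ * ‖v‖ * ‖gfun f t v‖ :=
        norm_fourierSMulRight_le _ _ _
    _ = 2 * Real.pi * ‖LL n‖ * (‖v‖ * ‖gfun f t v‖) := by ring

lemma inner_single (v : Eucl n) (j : Fin n) : (inner ℝ v (EuclideanSpace.single j (1:ℝ)) : ℝ) = v j := by
  simp [EuclideanSpace.inner_single_right]

lemma inner_single' (v : Eucl n) (j : Fin n) : (inner ℝ (EuclideanSpace.single j (1:ℝ)) v : ℝ) = v j := by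
  rw [real_inner_comm]; exact inner_single v j

lemma keyA (j : Fin n) (z : Eucl n) :
    Dop j (Poisson n ⇑f t) z = Poisson n (fun ζ => ((ζ j : ℝ) : ℂ) * f ζ) t z := by
  set c : ℝ := ((2 * Real.pi) ^ n : ℝ)⁻¹ with hc
  have hFI := VectorFourier.hasFDerivAt_fourierIntegral (LL n) (g_int f t) (g_norm_int f t) z
  have hP : HasFDerivAt (Poisson n ⇑f t)
      (c • fourierIntegral Real.fourierChar volume (LL n).toLinearMap₁₂
        (fourierSMulRight (LL n) (gfun f t)) z) z := by
    have : Poisson n ⇑f t = fun z => c • fourierIntegral Real.fourierChar volume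
        (LL n).toLinearMap₁₂ (gfun f t) z := funext fun z => poisson_eq n (⇑f) t z
    rw [this]
    exact hFI.const_smul c
  rw [Dop, pd, hP.fderiv, ContinuousLinearMap.smul_apply,
    fourierIntegral_continuousLinearMap_apply Real.continuous_fourierChar (FSR_int f t), poisson_eq]
  rw [mul_smul_comm]
  congr 1
  unfold fourierIntegral
  rw [← integral_const_mul]
  refine integral_congr_ae (Filter.Eventually.of_forall fun v => ?_)
  simp only [Circle.smul_def, fourierSMulRight_apply, LL_apply, inner_single, smul_eq_mul,
    real_smul, gfun]
  push_cast
  have hp : (Real.pi : ℂ) ≠ 0 := Complex.ofReal_ne_zero.2 Real.pi_ne_zero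
  field_simp
  ring_nf
  simp only [Complex.I_sq]
  ring

lemma fd_apply_int (j : Fin n) :
    Integrable (fun v : Eucl n => fderiv ℝ (gfun f t) v (EuclideanSpace.single j 1))
      (volume : Measure (Eucl n)) :=
  (ContinuousLinearMap.apply ℝ ℂ (EuclideanSpace.single j 1)).integrable_comp (g_fderiv_int f t)

lemma hev (j : Fin n) (z : Eucl n) :
    fourierIntegral Real.fourierChar volume (LL n).toLinearMap₁₂
        (fun v => fderiv ℝ (gfun f t) v (EuclideanSpace.single j 1)) z
      = (-Complex.I * ((z j : ℝ) : ℂ)) *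
        fourierIntegral Real.fourierChar volume (LL n).toLinearMap₁₂ (gfun f t) z := by
  have hder := VectorFourier.fourierIntegral_fderiv (LL n) (g_int f t)
    (fun ζ => (hasFDerivAt_g f t ζ).differentiableAt) (g_fderiv_int f t)
  rw [← VectorFourier.fourierIntegral_continuousLinearMap_apply Real.continuous_fourierChar
    (g_fderiv_int f t), congrFun hder z, fourierSMulRight_apply]
  have h1 : (-(LL n).flip) z (EuclideanSpace.single j 1) = (2*Real.pi)⁻¹ * z j := by
    have : (LL n).flip z (EuclideanSpace.single j 1) = LL n (EuclideanSpace.single j 1) z := rfl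
    simp only [ContinuousLinearMap.neg_apply, this, LL_apply, inner_single']
    ring
  rw [h1]
  simp only [smul_eq_mul, real_smul]
  have hp : (Real.pi : ℂ) ≠ 0 := Complex.ofReal_ne_zero.2 Real.pi_ne_zero
  push_cast
  field_simp

lemma coord_abs_le (v : Eucl n) (j : Fin n) : |v j| ≤ ‖v‖ := by
  rw [← inner_single v j]
  calc |(inner ℝ v (EuclideanSpace.single j (1:ℝ)) : ℝ)| ≤ ‖v‖ * ‖EuclideanSpace.single j (1:ℝ)‖ :=
        abs_real_inner_le_norm _ _
    _ = ‖v‖ := by rw [EuclideanSpace.norm_single]; simp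

lemma B_cont (j : Fin n) : Continuous (fun v : Eucl n => EK n t v * (((v j : ℝ) : ℂ) * f v)) := by
  have h1 : Continuous (EK n t) := by
    apply Complex.continuous_exp.comp
    continuity
  have h2 : Continuous (fun v : Eucl n => ((v j : ℝ) : ℂ)) :=
    Complex.continuous_ofReal.comp (EuclideanSpace.proj j : Eucl n →L[ℝ] ℝ).continuous
  exact h1.mul (h2.mul f.continuous)

lemma B_int (j : Fin n) :
    Integrable (fun v : Eucl n => EK n t v * (((v j : ℝ) : ℂ) * f v)) (volume : Measure (Eucl n)) := by
  refine (g_norm_int f t).mono' (B_cont f t j).aestronglyMeasurable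
    (Filter.Eventually.of_forall fun v => ?_)
  rw [norm_mul, EK_norm, one_mul, norm_mul, Complex.norm_real, Real.norm_eq_abs]
  have h1 : ‖v‖ * ‖gfun f t v‖ = ‖v‖ * ‖f v‖ := by
    rw [gfun, norm_mul, EK_norm, one_mul]
  rw [h1]
  exact mul_le_mul_of_nonneg_right (coord_abs_le v j) (norm_nonneg _)

lemma keyB (j : Fin n) (z : Eucl n) :
    Poisson n (Dop j ⇑f) t z
      = 2 * (t:ℂ) * Poisson n (fun ζ => ((ζ j : ℝ):ℂ) * f ζ) t z
        - ((z j : ℝ):ℂ) * Poisson n ⇑f t z := by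
  have hL : Continuous fun p : Eucl n × Eucl n => (LL n).toLinearMap₁₂ p.1 p.2 := (LL n).continuous₂
  have hA : Integrable (fun v : Eucl n =>
      (Real.fourierChar (-(LL n).toLinearMap₁₂ v z) : Circle) •
        (fderiv ℝ (gfun f t) v (EuclideanSpace.single j 1))) volume :=
    (VectorFourier.fourierIntegral_convergent_iff Real.continuous_fourierChar hL z).2
      (fd_apply_int f t j)
  have hB : Integrable (fun v : Eucl n =>
      (Real.fourierChar (-(LL n).toLinearMap₁₂ v z) : Circle) •
        (EK n t v * (((v j : ℝ) : ℂ) * f v))) volume :=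
    (VectorFourier.fourierIntegral_convergent_iff Real.continuous_fourierChar hL z).2
      (B_int f t j)
  rw [poisson_eq, poisson_eq, poisson_eq]
  have split : (fun v : Eucl n =>
      (Real.fourierChar (-(LL n).toLinearMap₁₂ v z) : Circle) • (EK n t v * Dop j (⇑f) v))
      = (fun v : Eucl n =>
        (-Complex.I) * ((Real.fourierChar (-(LL n).toLinearMap₁₂ v z) : Circle) •
          (fderiv ℝ (gfun f t) v (EuclideanSpace.single j 1)))
        + (2 * (t:ℂ)) * ((Real.fourierChar (-(LL n).toLinearMap₁₂ v z) : Circle) •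
          (EK n t v * (((v j : ℝ) : ℂ) * f v)))) := by
    funext v
    have hfd : fderiv ℝ (gfun f t) v (EuclideanSpace.single j 1)
        = EK n t v * (fderiv ℝ f v (EuclideanSpace.single j 1))
          + f v * (EK n t v * ((-Complex.I * (t:ℂ)) * ((2 * (v j : ℝ) : ℝ) : ℂ))) := by
      rw [fderiv_g f t v, ContinuousLinearMap.add_apply, ContinuousLinearMap.smul_apply,
        ContinuousLinearMap.smul_apply, EKd_apply, inner_single]
      simp only [smul_eq_mul]
    simp only [Circle.smul_def, Dop, pd, hfd, smul_eq_mul]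
    push_cast
    ring_nf
    try simp only [Complex.I_sq]
    try ring
  rw [show (fourierIntegral Real.fourierChar volume (LL n).toLinearMap₁₂
      (fun ζ => EK n t ζ * Dop j (⇑f) ζ) z) = ∫ v : Eucl n,
      ((Real.fourierChar (-(LL n).toLinearMap₁₂ v z) : Circle) • (EK n t v * Dop j (⇑f) v)) from rfl]
  rw [split, integral_add (hA.const_mul _) (hB.const_mul _), integral_const_mul, integral_const_mul]
  rw [show (∫ v : Eucl n, (Real.fourierChar (-(LL n).toLinearMap₁₂ v z) : Circle) •
      (fderiv ℝ (gfun f t) v (EuclideanSpace.single j 1))) = fourierIntegral Real.fourierChar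
      volume (LL n).toLinearMap₁₂ (fun v => fderiv ℝ (gfun f t) v (EuclideanSpace.single j 1)) z
      from rfl]
  rw [hev f t j z]
  rw [show (∫ v : Eucl n, (Real.fourierChar (-(LL n).toLinearMap₁₂ v z) : Circle) •
      (EK n t v * (((v j : ℝ) : ℂ) * f v))) = fourierIntegral Real.fourierChar
      volume (LL n).toLinearMap₁₂ (fun v => EK n t v * (((v j : ℝ) : ℂ) * f v)) z from rfl]
  have hYeq : fourierIntegral Real.fourierChar volume (LL n).toLinearMap₁₂
      (fun ζ : Eucl n => EK n t ζ * (((ζ j : ℝ) : ℂ) * f ζ)) z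
      = fourierIntegral Real.fourierChar volume (LL n).toLinearMap₁₂
        (fun v : Eucl n => EK n t v * (((v j : ℝ) : ℂ) * f v)) z := rfl
  rw [← hYeq]
  set X := fourierIntegral Real.fourierChar volume (LL n).toLinearMap₁₂ (gfun f t) z with hX
  set Y := fourierIntegral Real.fourierChar volume (LL n).toLinearMap₁₂
    (fun ζ : Eucl n => EK n t ζ * (((ζ j : ℝ) : ℂ) * f ζ)) z with hY
  have hXg : fourierIntegral Real.fourierChar volume (LL n).toLinearMap₁₂
      (fun ζ : Eucl n => EK n t ζ * f ζ) z = X := rfl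
  rw [hXg]
  simp only [smul_eq_mul, real_smul]
  push_cast
  ring_nf
  simp only [Complex.I_sq]
  ring


lemma EK_cont : Continuous (EK n t) := by
  apply Complex.continuous_exp.comp
  continuity

lemma EKmul_int {u : Eucl n → ℂ} (hu : Integrable u (volume : Measure (Eucl n))) :
    Integrable (fun ζ : Eucl n => EK n t ζ * u ζ) (volume : Measure (Eucl n)) := by
  refine hu.norm.mono' ((EK_cont t).aestronglyMeasurable.mul hu.1)
    (Filter.Eventually.of_forall fun ζ => ?_)
  rw [norm_mul, EK_norm, one_mul]

lemma poisson_sub (u v : Eucl n → ℂ) (hu : Integrable u (volume : Measure (Eucl n)))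
    (hv : Integrable v (volume : Measure (Eucl n))) (t : ℝ) (z : Eucl n) :
    Poisson n (fun ζ => u ζ - v ζ) t z = Poisson n u t z - Poisson n v t z := by
  have hL : Continuous fun p : Eucl n × Eucl n => (LL n).toLinearMap₁₂ p.1 p.2 := (LL n).continuous₂
  have h1 := (VectorFourier.fourierIntegral_convergent_iff
    Real.continuous_fourierChar hL z).2 (EKmul_int t hu)
  have h2 := (VectorFourier.fourierIntegral_convergent_iff
    Real.continuous_fourierChar hL z).2 (EKmul_int t hv)
  rw [poisson_eq, poisson_eq, poisson_eq, ← smul_sub]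
  congr 1
  rw [show (fourierIntegral Real.fourierChar volume (LL n).toLinearMap₁₂
      (fun ζ => EK n t ζ * (u ζ - v ζ)) z) = ∫ ζ : Eucl n,
      ((Real.fourierChar (-(LL n).toLinearMap₁₂ ζ z) : Circle) • (EK n t ζ * (u ζ - v ζ))) from rfl,
    show (fourierIntegral Real.fourierChar volume (LL n).toLinearMap₁₂
      (fun ζ => EK n t ζ * u ζ) z) = ∫ ζ : Eucl n,
      ((Real.fourierChar (-(LL n).toLinearMap₁₂ ζ z) : Circle) • (EK n t ζ * u ζ)) from rfl,
    show (fourierIntegral Real.fourierChar volume (LL n).toLinearMap₁₂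
      (fun ζ => EK n t ζ * v ζ) z) = ∫ ζ : Eucl n,
      ((Real.fourierChar (-(LL n).toLinearMap₁₂ ζ z) : Circle) • (EK n t ζ * v ζ)) from rfl,
    ← integral_sub h1 h2]
  refine integral_congr_ae (Filter.Eventually.of_forall fun ζ => ?_)
  simp only [Circle.smul_def, smul_eq_mul]
  ring

def coordMul (i : Fin n) : SchwartzMap (Eucl n) ℂ →L[ℝ] SchwartzMap (Eucl n) ℂ :=
  SchwartzMap.bilinLeftCLM ((ContinuousLinearMap.lsmul ℝ ℝ : ℝ →L[ℝ] ℂ →L[ℝ] ℂ).flip)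
    (EuclideanSpace.proj i : Eucl n →L[ℝ] ℝ).hasTemperateGrowth

lemma coordMul_apply (i : Fin n) (x : Eucl n) :
    (coordMul i f) x = ((x i : ℝ) : ℂ) * f x := by
  show ((ContinuousLinearMap.lsmul ℝ ℝ : ℝ →L[ℝ] ℂ →L[ℝ] ℂ).flip) (f x)
      ((EuclideanSpace.proj i : Eucl n →L[ℝ] ℝ) x) = _
  simp only [ContinuousLinearMap.flip_apply, ContinuousLinearMap.lsmul_apply]
  rw [Complex.real_smul]
  rfl

lemma coordMul_coe (i : Fin n) : ⇑(coordMul i f) = fun x : Eucl n => ((x i : ℝ) : ℂ) * f x :=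
  funext fun x => coordMul_apply f i x

lemma Dop_coordMul (i j : Fin n) (hij : i ≠ j) (ζ : Eucl n) :
    Dop j (⇑(coordMul i f)) ζ = ((ζ i : ℝ) : ℂ) * Dop j (⇑f) ζ := by
  have hc : HasFDerivAt (fun x : Eucl n => ((x i : ℝ) : ℂ))
      (Complex.ofRealCLM.comp (EuclideanSpace.proj i : Eucl n →L[ℝ] ℝ)) ζ :=
    (Complex.ofRealCLM.comp (EuclideanSpace.proj i : Eucl n →L[ℝ] ℝ)).hasFDerivAt
  have hmul : HasFDerivAt (fun x : Eucl n => ((x i : ℝ) : ℂ) * f x)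
      (((ζ i : ℝ) : ℂ) • fderiv ℝ f ζ + f ζ • Complex.ofRealCLM.comp (EuclideanSpace.proj i : Eucl n →L[ℝ] ℝ)) ζ :=
    hc.mul (f.differentiableAt.hasFDerivAt (x := ζ))
  have hfun : ⇑(coordMul i f) = fun x : Eucl n => ((x i : ℝ) : ℂ) * f x := coordMul_coe f i
  rw [Dop, Dop, pd, pd, hfun, hmul.fderiv]
  have hz : (Complex.ofRealCLM.comp (EuclideanSpace.proj i : Eucl n →L[ℝ] ℝ))
      (EuclideanSpace.single j 1) = 0 := by
    simp only [ContinuousLinearMap.coe_comp', Function.comp_apply, Complex.ofRealCLM_apply]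
    have : (EuclideanSpace.proj i : Eucl n →L[ℝ] ℝ) (EuclideanSpace.single j 1)
        = (EuclideanSpace.single j (1:ℝ) : Eucl n) i := rfl
    rw [this, EuclideanSpace.single_apply]
    simp [hij]
  rw [ContinuousLinearMap.add_apply, ContinuousLinearMap.smul_apply,
    ContinuousLinearMap.smul_apply, hz, smul_eq_mul, smul_eq_mul, mul_zero, add_zero]
  ring

lemma Dop_int (F : SchwartzMap (Eucl n) ℂ) (j : Fin n) :
    Integrable (Dop j ⇑F) (volume : Measure (Eucl n)) := by
  have h := (LineDeriv.lineDerivOp (EuclideanSpace.single j (1:ℝ)) F : SchwartzMap (Eucl n) ℂ).integrable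
    (μ := (volume : Measure (Eucl n)))
  have h2 := h.const_mul (-Complex.I)
  refine h2.congr (Filter.Eventually.of_forall fun ζ => ?_)
  simp only [SchwartzMap.lineDerivOp_apply_eq_fderiv, Dop, pd]

end S18

/-- intertwining identities for the Poisson operator:
`(z_i D_{z_j} − z_j D_{z_i})𝒫₀f = 𝒫₀((ζ_i D_{ζ_j} − ζ_j D_{ζ_i})f)`,
`(2t D_{z_j} − z_j)𝒫₀f = 𝒫₀(D_{ζ_j} f)`, and `D_{z_j}𝒫₀f = 𝒫₀(ζ_j f)`. -/


theorem stmt18 (n : ℕ) (hn : 1 ≤ n) (f : SchwartzMap (Eucl n) ℂ)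
    (i j : Fin n) (hij : i ≠ j) :
    (∀ t : ℝ, ∀ z : Eucl n,
      (z i : ℂ) * Dop j (Poisson n ⇑f t) z - (z j : ℂ) * Dop i (Poisson n ⇑f t) z =
        Poisson n (fun ζ => (ζ i : ℂ) * Dop j ⇑f ζ - (ζ j : ℂ) * Dop i ⇑f ζ) t z) ∧
    (∀ t : ℝ, ∀ z : Eucl n,
      2 * (t : ℂ) * Dop j (Poisson n ⇑f t) z - (z j : ℂ) * Poisson n ⇑f t z =
        Poisson n (Dop j ⇑f) t z) ∧
    (∀ t : ℝ, ∀ z : Eucl n,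
      Dop j (Poisson n ⇑f t) z = Poisson n (fun ζ => (ζ j : ℂ) * f ζ) t z) := by
  refine ⟨?_, ?_, ?_⟩
  · intro t z
    rw [S18.keyA f t j z, S18.keyA f t i z]
    have hfun : (fun ζ : Eucl n => (ζ i : ℂ) * Dop j (⇑f) ζ - (ζ j : ℂ) * Dop i (⇑f) ζ)
        = fun ζ => Dop j (⇑(S18.coordMul i f)) ζ - Dop i (⇑(S18.coordMul j f)) ζ := by
      funext ζ
      rw [S18.Dop_coordMul f i j hij ζ, S18.Dop_coordMul f j i hij.symm ζ]
    rw [hfun, S18.poisson_sub _ _ (S18.Dop_int (S18.coordMul i f) j)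
      (S18.Dop_int (S18.coordMul j f) i) t z,
      S18.keyB (S18.coordMul i f) t j z, S18.keyB (S18.coordMul j f) t i z,
      S18.coordMul_coe f i, S18.coordMul_coe f j]
    have hswap : Poisson n (fun ζ : Eucl n => ((ζ j : ℝ) : ℂ) *
          ((fun x : Eucl n => ((x i : ℝ) : ℂ) * f x) ζ)) t z
        = Poisson n (fun ζ : Eucl n => ((ζ i : ℝ) : ℂ) *
          ((fun x : Eucl n => ((x j : ℝ) : ℂ) * f x) ζ)) t z := by
      congr 1
      funext ζ
      simp only []
      ring
    rw [hswap]
    ring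
  · intro t z
    rw [S18.keyA f t j z, S18.keyB f t j z]
  · intro t z
    exact S18.keyA f t j z
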